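/- Suppose η ∈ (δ_F, δ_s). Then the modified backstepping controller u₊*(F, M_s) := (δ_s - η)M_s + η M_s*(F) - ρπ(F, M_s) + cut₂((dM_s*/dF)(F), g(F,M_s) - δ_F F) satisfies u₊*(F, M_s) ≥ 0 for all (F, M_s) ∈ [0, F̂] × [0, ∞). -/

import Mathlib

noncomputable def gfun (bE nE dE dM gs k nu : ℝ) (F Ms : ℝ) : ℝ :=
  if 0 < F then
    nu * (1 - nu) * bE ^ 2 * nE ^ 2 * F ^ 2 /
      ((bE * F / k + nE + dE) *
        ((1 - nu) * nE * bE * F + (bE * F / k + nE + dE) * dM * gs * Ms))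
  else 0

noncomputable def Mstar (bE nE dE dM gs k nu Fhat : ℝ) (F : ℝ) : ℝ :=
  (1 - nu) * nE * bE ^ 2 * k * F * (Fhat - F) /
    (gs * dM * (bE * F + k * (nE + dE)) ^ 2)

noncomputable def pifun (bE nE dE dM gs k nu Fhat : ℝ) (F Ms : ℝ) : ℝ :=
  if Ms = Mstar bE nE dE dM gs k nu Fhat F then
    deriv (fun m => gfun bE nE dE dM gs k nu F m) Ms * F
  else
    (gfun bE nE dE dM gs k nu F Ms -
      nu * k * bE * nE / (nE * k + Fhat * bE + dE * k) * F) /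
      (Ms - Mstar bE nE dE dM gs k nu Fhat F) * F

noncomputable def cut2 (x y : ℝ) : ℝ := if x < 0 ∧ 0 < y then 0 else x * y

set_option maxHeartbeats 1000000 in
theorem stmt_17 (bE nE dE dM dF ds gs k nu Fhat rho eta : ℝ)
    (hbE : 0 < bE) (hnE : 0 < nE) (hdE : 0 < dE) (hdM : 0 < dM)
    (hdF : 0 < dF) (hds : 0 < ds) (hgs : 0 < gs) (hk : 0 < k)
    (hnu : nu ∈ Set.Ioo (0:ℝ) 1) (hFhat : 0 < Fhat)
    (hrho : 0 < rho) (heta : eta ∈ Set.Ioo dF ds) :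
    ∀ F Ms : ℝ, F ∈ Set.Icc (0:ℝ) Fhat → 0 ≤ Ms →
      0 ≤ (ds - eta) * Ms + eta * Mstar bE nE dE dM gs k nu Fhat F -
        rho * pifun bE nE dE dM gs k nu Fhat F Ms +
        cut2 (deriv (Mstar bE nE dE dM gs k nu Fhat) F)
          (gfun bE nE dE dM gs k nu F Ms - dF * F) := by
  obtain ⟨hnu0, hnu1⟩ := hnu
  obtain ⟨hetaF, hetas⟩ := heta
  intro F Ms hF hMs
  obtain ⟨hF0, hFle⟩ := hF
  have hnu1' : 0 < 1 - nu := by linarith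
  have hA : 0 < bE * F + k * (nE + dE) := by positivity
  have hFF : 0 ≤ F * (Fhat - F) := mul_nonneg hF0 (by linarith)
  -- Mstar nonneg
  have hMstar0 : 0 ≤ Mstar bE nE dE dM gs k nu Fhat F := by
    unfold Mstar
    apply div_nonneg _ (by positivity)
    have : (1 - nu) * nE * bE ^ 2 * k * F * (Fhat - F)
        = ((1 - nu) * nE * bE ^ 2 * k) * (F * (Fhat - F)) := by ring
    rw [this]; exact mul_nonneg (by positivity) hFF
  -- gfun nonneg
  have hg0 : 0 ≤ gfun bE nE dE dM gs k nu F Ms := by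
    unfold gfun
    split_ifs with hFp
    · have ha : 0 < bE * F / k + nE + dE := by positivity
      have hb : 0 < (1 - nu) * nE * bE * F := by positivity
      apply div_nonneg (by positivity)
      have h0 : 0 ≤ (bE * F / k + nE + dE) * dM * gs * Ms := by positivity
      exact (mul_pos ha (by linarith)).le
    · exact le_refl _
  -- derivative of Mstar
  have hx : HasDerivAt (fun x : ℝ => x) 1 F := hasDerivAt_id F
  have hN : HasDerivAt (fun x : ℝ => (1 - nu) * nE * bE ^ 2 * k * x * (Fhat - x))
      ((1 - nu) * nE * bE ^ 2 * k * (Fhat - 2 * F)) F := by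
    have := (hx.const_mul ((1 - nu) * nE * bE ^ 2 * k)).mul
      ((hasDerivAt_const F Fhat).sub hx)
    exact this.congr_deriv (by simp only [Pi.sub_apply]; ring)
  have hD : HasDerivAt (fun x : ℝ => gs * dM * (bE * x + k * (nE + dE)) ^ 2)
      (gs * dM * (2 * (bE * F + k * (nE + dE)) * bE)) F := by
    have := (((hx.const_mul bE).add_const (k * (nE + dE))).pow 2).const_mul (gs * dM)
    exact this.congr_deriv (by ring)
  have hderM : deriv (Mstar bE nE dE dM gs k nu Fhat) F =
      ((1 - nu) * nE * bE ^ 2 * k * (Fhat - 2 * F) * (gs * dM * (bE * F + k * (nE + dE)) ^ 2)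
        - (1 - nu) * nE * bE ^ 2 * k * F * (Fhat - F) *
          (gs * dM * (2 * (bE * F + k * (nE + dE)) * bE))) /
      (gs * dM * (bE * F + k * (nE + dE)) ^ 2) ^ 2 :=
    (hN.div hD (by positivity)).deriv
  -- fact 3: deriv Mstar F * F ≤ Mstar F
  have hfact3 : deriv (Mstar bE nE dE dM gs k nu Fhat) F * F ≤ Mstar bE nE dE dM gs k nu Fhat F := by
    have hkey : Mstar bE nE dE dM gs k nu Fhat F - deriv (Mstar bE nE dE dM gs k nu Fhat) F * F
        = ((1 - nu) * nE * bE ^ 2 * k) * F ^ 2 *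
            ((bE * F + k * (nE + dE)) + 2 * bE * (Fhat - F)) /
          (gs * dM * (bE * F + k * (nE + dE)) ^ 3) := by
      rw [hderM]; unfold Mstar
      field_simp
      ring
    have h1 : 0 ≤ ((1 - nu) * nE * bE ^ 2 * k) * F ^ 2 *
        ((bE * F + k * (nE + dE)) + 2 * bE * (Fhat - F)) /
        (gs * dM * (bE * F + k * (nE + dE)) ^ 3) := by
      apply div_nonneg _ (by positivity)
      have h2 : 0 ≤ (bE * F + k * (nE + dE)) + 2 * bE * (Fhat - F) := by nlinarith
      positivity
    linarith [hkey, h1]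
  -- pifun ≤ 0
  have hpi : pifun bE nE dE dM gs k nu Fhat F Ms ≤ 0 := by
    rcases eq_or_lt_of_le hF0 with hF0' | hFp
    · unfold pifun
      split <;> rw [← hF0'] <;> simp
    · have ha : 0 < bE * F / k + nE + dE := by positivity
      have hb : 0 < (1 - nu) * nE * bE * F := by positivity
      have hDm : 0 < (bE * F / k + nE + dE) *
          ((1 - nu) * nE * bE * F + (bE * F / k + nE + dE) * dM * gs * Ms) := by
        have h0 : 0 ≤ (bE * F / k + nE + dE) * dM * gs * Ms := by positivity
        exact mul_pos ha (by linarith)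
      unfold pifun
      split_ifs with hcase
      · -- Ms = Mstar, derivative of g in Ms
        have hgl : (fun m => gfun bE nE dE dM gs k nu F m)
            = fun m => nu * (1 - nu) * bE ^ 2 * nE ^ 2 * F ^ 2 /
              ((bE * F / k + nE + dE) * (1 - nu) * nE * bE * F +
                ((bE * F / k + nE + dE) * ((bE * F / k + nE + dE) * dM * gs)) * m) := by
          funext m
          unfold gfun
          rw [if_pos hFp]
          ring_nf
        have hden : 0 < (bE * F / k + nE + dE) * (1 - nu) * nE * bE * F +
            ((bE * F / k + nE + dE) * ((bE * F / k + nE + dE) * dM * gs)) * Ms := by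
          have h0 : 0 ≤ ((bE * F / k + nE + dE) * ((bE * F / k + nE + dE) * dM * gs)) * Ms := by
            positivity
          nlinarith [mul_pos (mul_pos ha hnu1') (mul_pos (mul_pos hnE hbE) hFp)]
        have hdg : HasDerivAt (fun m : ℝ => nu * (1 - nu) * bE ^ 2 * nE ^ 2 * F ^ 2 /
              ((bE * F / k + nE + dE) * (1 - nu) * nE * bE * F +
                ((bE * F / k + nE + dE) * ((bE * F / k + nE + dE) * dM * gs)) * m))
            ((0 * ((bE * F / k + nE + dE) * (1 - nu) * nE * bE * F +
                ((bE * F / k + nE + dE) * ((bE * F / k + nE + dE) * dM * gs)) * Ms)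
              - nu * (1 - nu) * bE ^ 2 * nE ^ 2 * F ^ 2 *
                ((bE * F / k + nE + dE) * ((bE * F / k + nE + dE) * dM * gs))) /
              ((bE * F / k + nE + dE) * (1 - nu) * nE * bE * F +
                ((bE * F / k + nE + dE) * ((bE * F / k + nE + dE) * dM * gs)) * Ms) ^ 2) Ms := by
          have hm : HasDerivAt (fun m : ℝ =>
              (bE * F / k + nE + dE) * (1 - nu) * nE * bE * F +
                ((bE * F / k + nE + dE) * ((bE * F / k + nE + dE) * dM * gs)) * m)
              ((bE * F / k + nE + dE) * ((bE * F / k + nE + dE) * dM * gs)) Ms := by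
            have := ((hasDerivAt_id Ms).const_mul
              ((bE * F / k + nE + dE) * ((bE * F / k + nE + dE) * dM * gs))).const_add
              ((bE * F / k + nE + dE) * (1 - nu) * nE * bE * F)
            exact this.congr_deriv (by ring)
          exact (hasDerivAt_const Ms (nu * (1 - nu) * bE ^ 2 * nE ^ 2 * F ^ 2)).div hm hden.ne'
        rw [hgl]
        rw [hdg.deriv]
        apply mul_nonpos_of_nonpos_of_nonneg _ hF0
        apply div_nonpos_of_nonpos_of_nonneg _ (by positivity)
        nlinarith [mul_pos (mul_pos (mul_pos (mul_pos (mul_pos hnu0 hnu1') (pow_pos hbE 2))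
          (pow_pos hnE 2)) (pow_pos hFp 2)) (mul_pos ha (mul_pos (mul_pos ha hdM) hgs))]
      · -- Ms ≠ Mstar
        have heps : 0 < nu * k * bE * nE / (nE * k + Fhat * bE + dE * k) := by positivity
        have hdenM : (0:ℝ) < gs * dM * (bE * F + k * (nE + dE)) ^ 2 := by positivity
        have hkey : gfun bE nE dE dM gs k nu F Ms -
            nu * k * bE * nE / (nE * k + Fhat * bE + dE * k) * F
            = (nu * k * bE * nE / (nE * k + Fhat * bE + dE * k) * F *
                (bE * F / k + nE + dE) ^ 2 * dM * gs /
                ((bE * F / k + nE + dE) *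
                  ((1 - nu) * nE * bE * F + (bE * F / k + nE + dE) * dM * gs * Ms))) *
              (Mstar bE nE dE dM gs k nu Fhat F - Ms) := by
          unfold gfun Mstar
          rw [if_pos hFp]
          field_simp
          ring
        rw [hkey]
        rw [mul_div_assoc]
        have hne : Ms - Mstar bE nE dE dM gs k nu Fhat F ≠ 0 := sub_ne_zero.mpr hcase
        have : (Mstar bE nE dE dM gs k nu Fhat F - Ms) /
            (Ms - Mstar bE nE dE dM gs k nu Fhat F) = -1 := by
          field_simp
          ring
        rw [this]
        have hc : 0 ≤ nu * k * bE * nE / (nE * k + Fhat * bE + dE * k) * F *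
            (bE * F / k + nE + dE) ^ 2 * dM * gs /
            ((bE * F / k + nE + dE) *
              ((1 - nu) * nE * bE * F + (bE * F / k + nE + dE) * dM * gs * Ms)) := by
          positivity
        nlinarith
  -- main combination
  have hterm1 : 0 ≤ (ds - eta) * Ms := mul_nonneg (by linarith) hMs
  have hterm2 : 0 ≤ eta * Mstar bE nE dE dM gs k nu Fhat F :=
    mul_nonneg (by linarith) hMstar0
  have hterm3 : rho * pifun bE nE dE dM gs k nu Fhat F Ms ≤ 0 :=
    mul_nonpos_of_nonneg_of_nonpos hrho.le hpi
  unfold cut2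
  split_ifs with hcut
  · linarith
  · set x := deriv (Mstar bE nE dE dM gs k nu Fhat) F with hxdef
    set y := gfun bE nE dE dM gs k nu F Ms - dF * F with hydef
    rcases lt_or_ge x 0 with hxneg | hxpos
    · have hy0 : y ≤ 0 := by
        by_contra hy
        exact hcut ⟨hxneg, lt_of_not_ge hy⟩
      have : 0 ≤ x * y := by nlinarith [mul_nonneg (neg_nonneg.2 hxneg.le) (neg_nonneg.2 hy0)]
      linarith
    · rcases le_or_gt 0 y with hy0 | hy0
      · have : 0 ≤ x * y := mul_nonneg hxpos hy0
        linarith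
      · -- x ≥ 0, y < 0
        have hylb : -(dF * F) ≤ y := by
          rw [hydef]; linarith
        have h1 : x * (-(dF * F)) ≤ x * y := mul_le_mul_of_nonneg_left hylb hxpos
        have h2 : dF * (x * F) ≤ dF * Mstar bE nE dE dM gs k nu Fhat F :=
          mul_le_mul_of_nonneg_left hfact3 hdF.le
        nlinarith
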